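/- Let (V,h) be a 6-dimensional real inner product space, let J be a linear isometry of V with J∘J = −id, define ω(x,y) = h(Jx,y), and let A be an endomorphism of V with ω(Ax,y) + ω(x,Ay) = 0 for all x,y, which is normal with respect to h (A∘A* = A*∘A, where A* is the h-adjoint). Let S = (1/2)(A + A*) and L = (1/2)(A − A*). Then S∘L = L∘S, there exist orthonormal vectors e_1, e_2, e_3 in V such that (e_1, e_2, e_3, Je_1, Je_2, Je_3) is an orthonormal basis of V, and there exist real numbers s_1, s_2, s_3 such that S e_i = s_i · e_i and S(J e_i) = −s_i · (J e_i) for i = 1, 2, 3; moreover L preserves every eigenspace of S, i.e. L(ker(S − s·id)) ⊆ ker(S − s·id) for every real s. -/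

import Mathlib

open scoped RealInnerProductSpace

/-- The symmetric part of an endomorphism with respect to the inner product. -/
noncomputable def symmPart {V : Type*} [NormedAddCommGroup V] [InnerProductSpace ℝ V]
    [FiniteDimensional ℝ V] (A : V →ₗ[ℝ] V) : V →ₗ[ℝ] V :=
  (2⁻¹ : ℝ) • (A + LinearMap.adjoint A)

/-- The skew-symmetric part of an endomorphism with respect to the inner product. -/
noncomputable def skewPart {V : Type*} [NormedAddCommGroup V] [InnerProductSpace ℝ V]
    [FiniteDimensional ℝ V] (A : V →ₗ[ℝ] V) : V →ₗ[ℝ] V :=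
  (2⁻¹ : ℝ) • (A - LinearMap.adjoint A)


lemma mem_orthogonal_span_iff' {V : Type*} [NormedAddCommGroup V] [InnerProductSpace ℝ V]
    (s : Set V) (x : V) : x ∈ (Submodule.span ℝ s)ᗮ ↔ ∀ v ∈ s, ⟪v, x⟫ = 0 := by
  rw [Submodule.mem_orthogonal]
  constructor
  · intro h v hv; exact h v (Submodule.subset_span hv)
  · intro h u hu
    induction hu using Submodule.span_induction with
    | mem v hv => exact h v hv
    | zero => simp
    | add a b _ _ ha hb => simp [inner_add_left, ha, hb]
    | smul c a _ ha => simp [inner_smul_left, ha]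

lemma key_lemma : ∀ (n : ℕ) (V : Type*) [NormedAddCommGroup V] [InnerProductSpace ℝ V]
    [FiniteDimensional ℝ V], Module.finrank ℝ V = 2 * n →
    ∀ (J S : V →ₗ[ℝ] V),
    (∀ x y : V, ⟪J x, J y⟫ = ⟪x, y⟫) →
    (∀ x : V, J (J x) = -x) →
    S.IsSymmetric →
    (∀ x, S (J x) = -(J (S x))) →
    ∃ (e : Fin n → V) (s : Fin n → ℝ),
      Orthonormal ℝ (Sum.elim e (fun i => J (e i))) ∧
      ∀ i, S (e i) = s i • e i ∧ S (J (e i)) = -(s i) • J (e i) := by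
  intro n
  induction n with
  | zero =>
    intro V _ _ _ hdim J S hJiso hJ2 hS hanti
    refine ⟨Fin.elim0, Fin.elim0, orthonormal_iff_ite.mpr ?_, fun i => i.elim0⟩
    rintro (i | i) <;> exact i.elim0
  | succ n ih =>
    intro V _ _ _ hdim J S hJiso hJ2 hS hanti
    have hdim' : Module.finrank ℝ V = 2 * n + 2 := by omega
    -- orthogonality of x and J x
    have hxJx : ∀ x : V, ⟪x, J x⟫ = 0 := by
      intro x
      have h1 := hJiso x (J x)
      rw [hJ2, inner_neg_right] at h1
      have h2 := real_inner_comm (J x) x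
      linarith
    -- eigenvector of S
    let b := hS.eigenvectorBasis hdim'
    let i0 : Fin (2 * n + 2) := ⟨0, by omega⟩
    set e₁ := b i0 with he₁def
    set μ := hS.eigenvalues hdim' i0 with hμdef
    have he1 : S e₁ = μ • e₁ := by
      exact_mod_cast hS.apply_eigenvectorBasis hdim' i0
    have hne1 : ‖e₁‖ = 1 := b.orthonormal.1 i0
    have h11 : ⟪e₁, e₁⟫ = 1 := by
      rw [real_inner_self_eq_norm_mul_norm, hne1]; norm_num
    have hJ11 : ⟪J e₁, J e₁⟫ = 1 := by rw [hJiso]; exact h11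
    have hnJ1 : ‖J e₁‖ = 1 := by
      have h := hJ11
      rw [real_inner_self_eq_norm_sq] at h
      nlinarith [norm_nonneg (J e₁)]
    have hSJe1 : S (J e₁) = -μ • J e₁ := by
      rw [hanti, he1, map_smul]
      simp
    -- the orthogonal complement
    set W := Submodule.span ℝ ({e₁, J e₁} : Set V) with hWdef
    set K := Wᗮ with hKdef
    have memK : ∀ x : V, x ∈ K ↔ (⟪e₁, x⟫ = 0 ∧ ⟪J e₁, x⟫ = 0) := by
      intro x
      rw [hKdef, hWdef, mem_orthogonal_span_iff']
      constructor
      · intro h; exact ⟨h e₁ (by simp), h (J e₁) (by simp)⟩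
      · rintro ⟨h1, h2⟩ v hv
        simp only [Set.mem_insert_iff, Set.mem_singleton_iff] at hv
        rcases hv with rfl | rfl
        · exact h1
        · exact h2
    have hJK : ∀ x ∈ K, J x ∈ K := by
      intro x hx
      rw [memK] at hx ⊢
      obtain ⟨h1, h2⟩ := hx
      constructor
      · have h := hJiso (J e₁) x
        rw [hJ2, inner_neg_left] at h
        rw [h2] at h
        linarith
      · rw [hJiso]; exact h1
    have hSK : ∀ x ∈ K, S x ∈ K := by
      intro x hx
      rw [memK] at hx ⊢
      obtain ⟨h1, h2⟩ := hx
      constructor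
      · rw [real_inner_comm, hS x e₁, he1, real_inner_smul_right]
        have hx : ⟪x, e₁⟫ = 0 := by rw [real_inner_comm]; exact h1
        rw [hx, mul_zero]
      · rw [real_inner_comm, hS x (J e₁), hSJe1, real_inner_smul_right]
        have hx : ⟪x, J e₁⟫ = 0 := by rw [real_inner_comm]; exact h2
        rw [hx, mul_zero]
    have hJe1e1 : ⟪J e₁, e₁⟫ = 0 := by rw [real_inner_comm]; exact hxJx e₁
    -- dimension of K
    have hpair : Orthonormal ℝ (![e₁, J e₁]) := by
      rw [orthonormal_iff_ite]
      intro i j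
      fin_cases i <;> fin_cases j <;>
        simp [h11, hJ11, hxJx e₁, hJe1e1, hne1, hnJ1]
    have hrange : Set.range ![e₁, J e₁] = ({e₁, J e₁} : Set V) := by
      ext v
      simp [Matrix.range_cons, Matrix.range_empty]
      tauto
    have hW2 : Module.finrank ℝ W = 2 := by
      rw [hWdef, ← hrange, finrank_span_eq_card hpair.linearIndependent]
      simp
    have hKdim : Module.finrank ℝ K = 2 * n := by
      have := W.finrank_add_finrank_orthogonal
      rw [← hKdef, hW2, hdim'] at this
      omega
    -- restricted operators
    set J' : K →ₗ[ℝ] K := J.restrict hJK with hJ'def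
    set S' : K →ₗ[ℝ] K := S.restrict hSK with hS'def
    have hJ'iso : ∀ x y : K, ⟪J' x, J' y⟫ = ⟪x, y⟫ := by
      intro x y
      rw [Submodule.coe_inner, Submodule.coe_inner, hJ'def,
        LinearMap.restrict_coe_apply, LinearMap.restrict_coe_apply]
      exact hJiso x y
    have hJ'2 : ∀ x : K, J' (J' x) = -x := by
      intro x
      apply Subtype.ext
      rw [hJ'def]
      simp only [LinearMap.restrict_coe_apply]
      rw [hJ2]
      simp
    have hS'sym : S'.IsSymmetric := by
      intro x y
      rw [Submodule.coe_inner, Submodule.coe_inner, hS'def,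
        LinearMap.restrict_coe_apply, LinearMap.restrict_coe_apply]
      exact hS x y
    have hanti' : ∀ x : K, S' (J' x) = -(J' (S' x)) := by
      intro x
      apply Subtype.ext
      simp only [hS'def, hJ'def, LinearMap.restrict_coe_apply, Submodule.coe_neg]
      exact hanti x
    obtain ⟨e', s', ho', hprop'⟩ := ih K hKdim J' S' hJ'iso hJ'2 hS'sym hanti'
    -- assemble
    refine ⟨Fin.cons e₁ (fun i => (e' i : V)), Fin.cons μ s', ?_, ?_⟩
    · have hIH := orthonormal_iff_ite.mp ho'
      have hIH' : ∀ p q : Fin n ⊕ Fin n,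
          ⟪((Sum.elim e' (fun i => J' (e' i)) p : K) : V),
            ((Sum.elim e' (fun i => J' (e' i)) q : K) : V)⟫ =
          if p = q then (1 : ℝ) else 0 := by
        intro p q
        rw [← Submodule.coe_inner]
        exact hIH p q
      have hcoeJ : ∀ i, ((J' (e' i) : K) : V) = J (e' i : V) := by
        intro i; rw [hJ'def, LinearMap.restrict_coe_apply]
      have hc0a : ∀ i, ⟪e₁, (e' i : V)⟫ = 0 := fun i => ((memK _).mp (e' i).2).1
      have hc0b : ∀ i, ⟪J e₁, (e' i : V)⟫ = 0 := fun i => ((memK _).mp (e' i).2).2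
      have hcJa : ∀ i, ⟪e₁, J (e' i : V)⟫ = 0 := fun i => ((memK _).mp (hJK _ (e' i).2)).1
      have hcJb : ∀ i, ⟪J e₁, J (e' i : V)⟫ = 0 := fun i => ((memK _).mp (hJK _ (e' i).2)).2
      have hc0a' : ∀ i, ⟪(e' i : V), e₁⟫ = 0 := fun i => by rw [real_inner_comm]; exact hc0a i
      have hc0b' : ∀ i, ⟪(e' i : V), J e₁⟫ = 0 := fun i => by rw [real_inner_comm]; exact hc0b i
      have hcJa' : ∀ i, ⟪J (e' i : V), e₁⟫ = 0 := fun i => by rw [real_inner_comm]; exact hcJa i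
      have hcJb' : ∀ i, ⟪J (e' i : V), J e₁⟫ = 0 := fun i => by rw [real_inner_comm]; exact hcJb i
      rw [orthonormal_iff_ite]
      rintro (i | i) (j | j) <;>
        rcases Fin.eq_zero_or_eq_succ i with rfl | ⟨i', rfl⟩ <;>
        rcases Fin.eq_zero_or_eq_succ j with rfl | ⟨j', rfl⟩
      · simp [h11, hne1]
      · simp [hc0a, (Fin.succ_ne_zero j').symm]
      · simp [hc0a', Fin.succ_ne_zero]
      · have h := hIH' (Sum.inl i') (Sum.inl j')
        simp only [Sum.elim_inl] at h
        simp only [Sum.elim_inl, Fin.cons_succ]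
        rw [h]
        simp [Fin.succ_inj]
      · simp [hxJx e₁]
      · simp [hcJa]
      · simp [hc0b']
      · have h := hIH' (Sum.inl i') (Sum.inr j')
        simp only [Sum.elim_inl, Sum.elim_inr, hcoeJ] at h
        simp only [Sum.elim_inl, Sum.elim_inr, Fin.cons_succ]
        simpa using h
      · simp [hJe1e1]
      · simp [hc0b]
      · simp [hcJa']
      · have h := hIH' (Sum.inr i') (Sum.inl j')
        simp only [Sum.elim_inl, Sum.elim_inr, hcoeJ] at h
        simp only [Sum.elim_inl, Sum.elim_inr, Fin.cons_succ]
        simpa using h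
      · simp [hJ11, hnJ1]
      · simp [hcJb, (Fin.succ_ne_zero j').symm]
      · simp [hcJb', Fin.succ_ne_zero]
      · have h := hIH' (Sum.inr i') (Sum.inr j')
        simp only [Sum.elim_inl, Sum.elim_inr, hcoeJ] at h
        simp only [Sum.elim_inl, Sum.elim_inr, Fin.cons_succ]
        rw [h]
        simp [Fin.succ_inj]
    · intro i
      rcases Fin.eq_zero_or_eq_succ i with rfl | ⟨i', rfl⟩
      · simp only [Fin.cons_zero]
        exact ⟨he1, hSJe1⟩
      · simp only [Fin.cons_succ]
        obtain ⟨hp1, hp2⟩ := hprop' i'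
        constructor
        · have := congrArg (Subtype.val) hp1
          simpa [hS'def, LinearMap.restrict_coe_apply] using this
        · have := congrArg (Subtype.val) hp2
          simp only [hS'def, hJ'def, LinearMap.restrict_coe_apply,
            Submodule.coe_smul] at this
          exact this

/-- on a 6-dimensional real inner product space with orthogonal complex
structure `J`, if `A ∈ sp(ω)` (with `ω(x,y) = h(Jx,y)`) is normal, then its symmetric part `S`
and skew part `L` commute, `S` diagonalises as `S eᵢ = sᵢ eᵢ`, `S (J eᵢ) = -sᵢ (J eᵢ)` in a
suitable orthonormal basis `(e₁,e₂,e₃,Je₁,Je₂,Je₃)`, and `L` preserves every eigenspace of `S`. -/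
theorem stmt3 {V : Type*} [NormedAddCommGroup V] [InnerProductSpace ℝ V]
    [FiniteDimensional ℝ V] (hdim : Module.finrank ℝ V = 6)
    (J A : V →ₗ[ℝ] V)
    (hJiso : ∀ x y : V, ⟪J x, J y⟫ = ⟪x, y⟫)
    (hJ2 : ∀ x : V, J (J x) = -x)
    (hA : ∀ x y : V, ⟪J (A x), y⟫ + ⟪J x, A y⟫ = 0)
    (hnormal : A ∘ₗ LinearMap.adjoint A = LinearMap.adjoint A ∘ₗ A) :
    symmPart A ∘ₗ skewPart A = skewPart A ∘ₗ symmPart A ∧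
    (∃ (e : Fin 3 → V) (s : Fin 3 → ℝ),
      Orthonormal ℝ (Sum.elim e (fun i => J (e i))) ∧
      Submodule.span ℝ (Set.range (Sum.elim e (fun i => J (e i)))) = ⊤ ∧
      ∀ i : Fin 3, symmPart A (e i) = s i • e i ∧
        symmPart A (J (e i)) = -(s i) • J (e i)) ∧
    ∀ c : ℝ, Submodule.map (skewPart A) (LinearMap.ker (symmPart A - c • LinearMap.id)) ≤
      LinearMap.ker (symmPart A - c • LinearMap.id) := by
  classical
  set B := LinearMap.adjoint A with hB
  have hJadj : ∀ x y : V, ⟪J x, y⟫ = -⟪x, J y⟫ := by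
    intro x y
    have h := hJiso x (J y)
    rw [hJ2, inner_neg_right] at h
    linarith
  have h0 : ∀ y : V, B (J y) = -(J (A y)) := by
    intro y
    have key : ∀ x : V, ⟪x, B (J y) + J (A y)⟫ = 0 := by
      intro x
      have h1 := hA x y
      have h2 : ⟪J (A x), y⟫ = -⟪A x, J y⟫ := hJadj _ _
      have h3 : ⟪J x, A y⟫ = -⟪x, J (A y)⟫ := hJadj _ _
      have h4 : ⟪x, B (J y)⟫ = ⟪A x, J y⟫ := LinearMap.adjoint_inner_right A x (J y)
      rw [inner_add_right]
      linarith
    have h5 := key (B (J y) + J (A y))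
    rw [inner_self_eq_zero] at h5
    exact eq_neg_of_add_eq_zero_left h5
  have hadj : ∀ x : V, B x = J (A (J x)) := by
    intro x
    have h := h0 (-(J x))
    simp only [map_neg, hJ2, neg_neg] at h
    exact h
  have hanti : ∀ x, symmPart A (J x) = -(J (symmPart A x)) := by
    intro x
    simp only [symmPart, ← hB, LinearMap.smul_apply, LinearMap.add_apply, hadj, hJ2,
      map_add, map_neg, map_smul, smul_neg, neg_neg]
    module
  have hSym : (symmPart A).IsSymmetric := by
    intro x y
    simp only [symmPart, ← hB, LinearMap.smul_apply, LinearMap.add_apply,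
      real_inner_smul_left, real_inner_smul_right, inner_add_left, inner_add_right]
    have h1 : ⟪B x, y⟫ = ⟪x, A y⟫ := LinearMap.adjoint_inner_left A y x
    have h2 : ⟪A x, y⟫ = ⟪x, B y⟫ := (LinearMap.adjoint_inner_right A x y).symm
    rw [h1, h2]
    ring
  have hcomm : (A + B) ∘ₗ (A - B) = (A - B) ∘ₗ (A + B) := by
    simp only [LinearMap.add_comp, LinearMap.sub_comp, LinearMap.comp_add,
      LinearMap.comp_sub, hnormal]
    abel
  have part1 : symmPart A ∘ₗ skewPart A = skewPart A ∘ₗ symmPart A := by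
    simp only [symmPart, skewPart, ← hB, LinearMap.smul_comp, LinearMap.comp_smul, hcomm]
  refine ⟨part1, ?_, ?_⟩
  · have hdim6 : Module.finrank ℝ V = 2 * 3 := by omega
    obtain ⟨e, s, ho, hp⟩ := key_lemma 3 V hdim6 J (symmPart A) hJiso hJ2 hSym hanti
    refine ⟨e, s, ho, ?_, hp⟩
    apply (ho.linearIndependent).span_eq_top_of_card_eq_finrank
    simp [hdim]
  · intro c x hx
    rw [Submodule.mem_map] at hx
    obtain ⟨y, hy, rfl⟩ := hx
    rw [LinearMap.mem_ker] at hy ⊢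
    have hy' : symmPart A y = c • y := by
      simpa only [LinearMap.sub_apply, LinearMap.smul_apply, LinearMap.id_apply,
        sub_eq_zero] using hy
    have hc := LinearMap.ext_iff.mp part1 y
    simp only [LinearMap.comp_apply] at hc
    simp only [LinearMap.sub_apply, LinearMap.smul_apply, LinearMap.id_apply]
    rw [hc, hy', map_smul, sub_self]
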